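/- Let R be a commutative ring with identity and M a distributive R-module. A proper submodule N of M is strongly 2-irreducible if and only if N is 2-irreducible. -/
import Mathlib


def Is2Irreducible {R M : Type*} [CommRing R] [AddCommGroup M] [Module R M]
    (N : Submodule R M) : Prop :=
  ∀ H₁ H₂ H₃ : Submodule R M, N = H₁ ⊓ H₂ ⊓ H₃ →
    N = H₁ ⊓ H₂ ∨ N = H₁ ⊓ H₃ ∨ N = H₂ ⊓ H₃

def IsStrongly2Irreducible {R M : Type*} [CommRing R] [AddCommGroup M] [Module R M]
    (N : Submodule R M) : Prop :=
  N ≠ ⊤ ∧ ∀ H₁ H₂ H₃ : Submodule R M, H₁ ⊓ H₂ ⊓ H₃ ≤ N →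
    H₁ ⊓ H₂ ≤ N ∨ H₁ ⊓ H₃ ≤ N ∨ H₂ ⊓ H₃ ≤ N

def IsDistributiveModule (R M : Type*) [CommRing R] [AddCommGroup M] [Module R M] : Prop :=
  ∀ A B C : Submodule R M, A ⊓ (B ⊔ C) = A ⊓ B ⊔ A ⊓ C

theorem stmt_2 {R M : Type*} [CommRing R] [AddCommGroup M] [Module R M]
    (hdist : IsDistributiveModule R M) (N : Submodule R M) (hN : N ≠ ⊤) :
    IsStrongly2Irreducible N ↔ Is2Irreducible N := by
  have key : ∀ a b n : Submodule R M, (a ⊔ n) ⊓ (b ⊔ n) = (a ⊓ b) ⊔ n := by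
    intro a b n
    rw [hdist, inf_eq_right.mpr (le_sup_right : n ≤ a ⊔ n),
      inf_comm (a ⊔ n) b, hdist, sup_assoc,
      sup_eq_right.mpr (inf_le_right : b ⊓ n ≤ n), inf_comm b a]
  constructor
  · rintro ⟨-, hs⟩ H₁ H₂ H₃ hEq
    rcases hs H₁ H₂ H₃ hEq.ge with h | h | h
    · exact Or.inl (le_antisymm (hEq.le.trans inf_le_left) h)
    · refine Or.inr (Or.inl (le_antisymm ?_ h))
      exact le_inf (hEq.le.trans (inf_le_left.trans inf_le_left)) (hEq.le.trans inf_le_right)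
    · refine Or.inr (Or.inr (le_antisymm ?_ h))
      exact le_inf (hEq.le.trans (inf_le_left.trans inf_le_right)) (hEq.le.trans inf_le_right)
  · intro h2
    refine ⟨hN, fun H₁ H₂ H₃ hle => ?_⟩
    have hEq : N = (H₁ ⊔ N) ⊓ (H₂ ⊔ N) ⊓ (H₃ ⊔ N) := by
      rw [key, key, sup_eq_right.mpr hle]
    rcases h2 _ _ _ hEq with h | h | h
    · exact Or.inl (by rw [key] at h; exact le_sup_left.trans h.ge)
    · exact Or.inr (Or.inl (by rw [key] at h; exact le_sup_left.trans h.ge))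
    · exact Or.inr (Or.inr (by rw [key] at h; exact le_sup_left.trans h.ge))
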